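/- Let T : ℓ_∞^3 → ℓ_2^3 be the bounded linear operator defined by Tx = x/√3, where ℓ_∞^3 is ℝ³ with the norm ‖(a,b,c)‖ = max{|a|,|b|,|c|} and ℓ_2^3 is ℝ³ with the Euclidean norm. Then T does not satisfy the Bhatia–Šemrl property; that is, there exists a bounded linear operator A : ℓ_∞^3 → ℓ_2^3 with T ⊥_B A such that Tx is not Birkhoff–James orthogonal to Ax for any x ∈ M_T. -/

import Mathlib

/-- Birkhoff–James orthogonality: `x ⊥_B y` iff `‖x + λ y‖ ≥ ‖x‖` for all real `λ`. -/
def BJOrth {E : Type*} [NormedAddCommGroup E] [NormedSpace ℝ E] (x y : E) : Prop :=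
  ∀ lam : ℝ, ‖x‖ ≤ ‖x + lam • y‖

/-- The norm attainment set of a bounded linear operator. -/
def normAttainSet {X Y : Type*} [NormedAddCommGroup X] [NormedSpace ℝ X]
    [NormedAddCommGroup Y] [NormedSpace ℝ Y] (T : X →L[ℝ] Y) : Set X :=
  {x | ‖x‖ = 1 ∧ ‖T x‖ = ‖T‖}

noncomputable def Amap : (Fin 3 → ℝ) →L[ℝ] EuclideanSpace ℝ (Fin 3) :=
  LinearMap.toContinuousLinearMap
  { toFun := fun x => (WithLp.equiv 2 (Fin 3 → ℝ)).symm ![x 1, x 0, 0]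
    map_add' := by
      intro x y
      ext i
      fin_cases i <;> simp [WithLp.equiv_symm_apply, PiLp.toLp_apply]
    map_smul' := by
      intro c x
      ext i
      fin_cases i <;> simp [WithLp.equiv_symm_apply, PiLp.toLp_apply] }

theorem Amap_apply (x : Fin 3 → ℝ) (i : Fin 3) : Amap x i = ![x 1, x 0, 0] i := by
  simp [Amap, WithLp.equiv_symm_apply, PiLp.toLp_apply]

theorem norm_euc (y : EuclideanSpace ℝ (Fin 3)) :
    ‖y‖ = Real.sqrt (y 0^2 + y 1^2 + y 2^2) := by
  simp [EuclideanSpace.norm_eq, Fin.sum_univ_three, sq_abs]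

theorem norm_sign_vec (x : Fin 3 → ℝ) (h : ∀ i, |x i| = 1) : ‖x‖ = 1 := by
  apply le_antisymm
  · apply pi_norm_le_iff_of_nonneg zero_le_one |>.2
    intro i; rw [Real.norm_eq_abs, h i]
  · calc (1:ℝ) = |x 0| := (h 0).symm
      _ = ‖x 0‖ := (Real.norm_eq_abs _).symm
      _ ≤ ‖x‖ := norm_le_pi_norm x 0

theorem normT_le (T : (Fin 3 → ℝ) →L[ℝ] EuclideanSpace ℝ (Fin 3))
    (hT : ∀ (v : Fin 3 → ℝ) (i : Fin 3), T v i = v i / Real.sqrt 3) : ‖T‖ ≤ 1 := by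
  apply ContinuousLinearMap.opNorm_le_bound _ zero_le_one
  intro v
  rw [one_mul, EuclideanSpace.norm_eq]
  have h3 : Real.sqrt 3 > 0 := by positivity
  have hb : ∀ i : Fin 3, ‖T v i‖^2 ≤ ‖v‖^2/3 := by
    intro i
    rw [hT]
    have := norm_le_pi_norm v i
    rw [Real.norm_eq_abs, abs_div, abs_of_pos h3, div_pow, Real.sq_sqrt (by norm_num : (0:ℝ) ≤ 3)]
    rw [Real.norm_eq_abs] at this
    have h2 : |v i|^2 ≤ ‖v‖^2 := pow_le_pow_left₀ (abs_nonneg _) this 2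
    linarith
  calc Real.sqrt (∑ i, ‖T v i‖^2) ≤ Real.sqrt (∑ _i : Fin 3, ‖v‖^2/3) := by
        apply Real.sqrt_le_sqrt; exact Finset.sum_le_sum fun i _ => hb i
    _ = ‖v‖ := by
        rw [Finset.sum_const]
        simp only [Finset.card_univ, Fintype.card_fin, nsmul_eq_mul, Nat.cast_ofNat]
        rw [show (3:ℝ)*(‖v‖^2/3) = ‖v‖^2 by ring, Real.sqrt_sq (norm_nonneg v)]

theorem normT_eq (T : (Fin 3 → ℝ) →L[ℝ] EuclideanSpace ℝ (Fin 3))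
    (hT : ∀ (v : Fin 3 → ℝ) (i : Fin 3), T v i = v i / Real.sqrt 3) : ‖T‖ = 1 := by
  have h3 : Real.sqrt 3 > 0 := by positivity
  have hsq : Real.sqrt 3 ^ 2 = 3 := Real.sq_sqrt (by norm_num)
  refine le_antisymm (normT_le T hT) ?_
  set v : Fin 3 → ℝ := fun _ => 1 with hvdef
  have hv : ‖v‖ = 1 := norm_sign_vec _ (fun i => by simp [hvdef])
  have hle := T.le_opNorm v
  rw [hv, mul_one] at hle
  refine le_trans (le_of_eq ?_) hle
  rw [norm_euc, hT, hT, hT]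
  have h13 : (v 0 / Real.sqrt 3)^2 = 1/3 := by
    simp only [hvdef]; rw [div_pow, hsq, one_pow]
  have h13' : v 0 = v 1 := rfl
  have h13'' : v 0 = v 2 := rfl
  rw [← h13', ← h13'', h13]
  norm_num

/-- The operator `T : ℓ_∞^3 → ℓ_2^3`, `T x = x / √3`, does not satisfy the
Bhatia–Šemrl property.  Here `ℓ_∞^3` is `Fin 3 → ℝ` with the sup norm and `ℓ_2^3` is
`EuclideanSpace ℝ (Fin 3)`. -/
theorem stmt19 (T : (Fin 3 → ℝ) →L[ℝ] EuclideanSpace ℝ (Fin 3))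
    (hT : ∀ (v : Fin 3 → ℝ) (i : Fin 3), T v i = v i / Real.sqrt 3) :
    ∃ A : (Fin 3 → ℝ) →L[ℝ] EuclideanSpace ℝ (Fin 3),
      (∀ lam : ℝ, ‖T‖ ≤ ‖T + lam • A‖) ∧
      ∀ x ∈ normAttainSet T, ¬ BJOrth (T x) (A x) := by
  have h3 : Real.sqrt 3 > 0 := by positivity
  have hsq : Real.sqrt 3 ^ 2 = 3 := Real.sq_sqrt (by norm_num)
  have ha : ((1:ℝ)/Real.sqrt 3)^2 = 1/3 := by rw [div_pow, hsq]; norm_num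
  have hap : (0:ℝ) < 1/Real.sqrt 3 := by positivity
  have hTnorm : ‖T‖ = 1 := normT_eq T hT
  refine ⟨Amap, ?_, ?_⟩
  · intro lam
    rw [hTnorm]
    rcases le_or_gt 0 lam with hl | hl
    · set u : Fin 3 → ℝ := ![1,1,1] with hu_def
      have hu : ‖u‖ = 1 := norm_sign_vec _ (by intro i; fin_cases i <;> norm_num [hu_def])
      have hle := (T + lam • Amap).le_opNorm u
      rw [hu, mul_one] at hle
      refine le_trans ?_ hle
      have happ : ∀ i, (T + lam • Amap) u i = T u i + lam * (Amap u i) := by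
        intro i
        simp [ContinuousLinearMap.add_apply, ContinuousLinearMap.smul_apply]
      rw [norm_euc, happ 0, happ 1, happ 2, hT, hT, hT, Amap_apply, Amap_apply, Amap_apply]
      have hu0 : u 0 = 1 := rfl
      have hu1 : u 1 = 1 := rfl
      have hu2 : u 2 = 1 := rfl
      rw [show (![u 1, u 0, 0] : Fin 3 → ℝ) 0 = u 1 from rfl,
          show (![u 1, u 0, 0] : Fin 3 → ℝ) 1 = u 0 from rfl,
          show (![u 1, u 0, 0] : Fin 3 → ℝ) 2 = 0 from rfl, hu0, hu1, hu2]
      apply Real.one_le_sqrt.2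
      nlinarith [ha, mul_nonneg hap.le hl, sq_nonneg lam]
    · set u : Fin 3 → ℝ := ![1,-1,1] with hu_def
      have hu : ‖u‖ = 1 := norm_sign_vec _ (by intro i; fin_cases i <;> norm_num [hu_def])
      have hle := (T + lam • Amap).le_opNorm u
      rw [hu, mul_one] at hle
      refine le_trans ?_ hle
      have happ : ∀ i, (T + lam • Amap) u i = T u i + lam * (Amap u i) := by
        intro i
        simp [ContinuousLinearMap.add_apply, ContinuousLinearMap.smul_apply]
      rw [norm_euc, happ 0, happ 1, happ 2, hT, hT, hT, Amap_apply, Amap_apply, Amap_apply]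
      have hu0 : u 0 = 1 := rfl
      have hu1 : u 1 = -1 := rfl
      have hu2 : u 2 = 1 := rfl
      rw [show (![u 1, u 0, 0] : Fin 3 → ℝ) 0 = u 1 from rfl,
          show (![u 1, u 0, 0] : Fin 3 → ℝ) 1 = u 0 from rfl,
          show (![u 1, u 0, 0] : Fin 3 → ℝ) 2 = 0 from rfl, hu0, hu1, hu2]
      apply Real.one_le_sqrt.2
      have e : (1 / Real.sqrt 3 + lam * -1) ^ 2 + (-1 / Real.sqrt 3 + lam * 1) ^ 2 + (1 / Real.sqrt 3 + lam * 0) ^ 2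
          = 3*((1/Real.sqrt 3)^2) + (-4)*((1/Real.sqrt 3)*lam) + 2*lam^2 := by ring
      have hm : (1/Real.sqrt 3)*lam ≤ 0 := mul_nonpos_of_nonneg_of_nonpos hap.le hl.le
      rw [e, ha]
      nlinarith [sq_nonneg lam]
  · rintro x ⟨hx1, hx2⟩
    rw [hTnorm] at hx2
    -- each coordinate has square 1
    have hb : ∀ i, (x i)^2 ≤ 1 := by
      intro i
      have := norm_le_pi_norm x i
      rw [hx1, Real.norm_eq_abs] at this
      nlinarith [abs_nonneg (x i), sq_abs (x i)]
    have hsum : (x 0)^2 + (x 1)^2 + (x 2)^2 = 3 := by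
      rw [norm_euc, hT, hT, hT] at hx2
      have h1' : (x 0 / Real.sqrt 3)^2 + (x 1 / Real.sqrt 3)^2 + (x 2 / Real.sqrt 3)^2 = 1 := by
        have hnn : (0:ℝ) ≤ (x 0 / Real.sqrt 3)^2 + (x 1 / Real.sqrt 3)^2 + (x 2 / Real.sqrt 3)^2 := by positivity
        nlinarith [Real.sq_sqrt hnn, hx2]
      rw [div_pow, div_pow, div_pow, hsq] at h1'
      field_simp at h1'
      linarith
    have h0 : (x 0)^2 = 1 := by nlinarith [hb 0, hb 1, hb 2]
    have h1 : (x 1)^2 = 1 := by nlinarith [hb 0, hb 1, hb 2]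
    have h2 : (x 2)^2 = 1 := by nlinarith [hb 0, hb 1, hb 2]
    intro hB
    set lam : ℝ := -(x 0 * x 1)/Real.sqrt 3 with hlam_def
    have key := hB lam
    have happ : ∀ i, (T x + lam • Amap x) i = T x i + lam * (Amap x i) := by
      intro i
      simp [PiLp.add_apply, PiLp.smul_apply, smul_eq_mul]
    have hc0 : T x 0 + lam * (Amap x 0) = 0 := by
      rw [hT, Amap_apply, hlam_def]
      show x 0 / Real.sqrt 3 + -(x 0 * x 1)/Real.sqrt 3 * x 1 = 0
      have e : x 0 / Real.sqrt 3 + -(x 0 * x 1)/Real.sqrt 3 * x 1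
          = x 0 / Real.sqrt 3 - (x 0 * (x 1^2)) / Real.sqrt 3 := by ring
      rw [e, h1]; ring
    have hc1 : T x 1 + lam * (Amap x 1) = 0 := by
      rw [hT, Amap_apply, hlam_def]
      show x 1 / Real.sqrt 3 + -(x 0 * x 1)/Real.sqrt 3 * x 0 = 0
      have e : x 1 / Real.sqrt 3 + -(x 0 * x 1)/Real.sqrt 3 * x 0
          = x 1 / Real.sqrt 3 - (x 1 * (x 0^2)) / Real.sqrt 3 := by ring
      rw [e, h0]; ring
    have hc2 : T x 2 + lam * (Amap x 2) = x 2 / Real.sqrt 3 := by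
      rw [hT, Amap_apply]
      show x 2 / Real.sqrt 3 + lam * 0 = x 2 / Real.sqrt 3
      ring
    have hval : (0:ℝ)^2 + 0^2 + (x 2 / Real.sqrt 3)^2 = 1/3 := by
      rw [div_pow, hsq, h2]; norm_num
    have hnr : ‖T x + lam • Amap x‖ = Real.sqrt (1/3) := by
      rw [norm_euc, happ 0, happ 1, happ 2, hc0, hc1, hc2, hval]
    rw [hx2, hnr] at key
    have : Real.sqrt (1/3) < 1 := by
      rw [show (1:ℝ) = Real.sqrt 1 from Real.sqrt_one.symm]
      exact Real.sqrt_lt_sqrt (by norm_num) (by norm_num)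
    linarith
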